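/- Assume for every agent i that f i (s i) 0 = 0 (remaining at the start state with zero control is a rest point of the dynamics) and that l i a 0 = 0 for every a ∈ E i (waiting has zero running cost). Let (t_f, d, y, v) be a backward-feasible tuple whose backward cost is less than or equal to the backward cost of every backward-feasible tuple. Define x i t := y i (t_f − t), and u i t := 0 for t < t_f − d i, u i t := v i (t_f − t) for t ≥ t_f − d i. Then (t_f, x, u) is a forward-feasible tuple, and its cost Σ_i ∫_0^{t_f} l i (x i t) (u i t) dt is less than or equal to the cost Σ_i ∫_0^{t'_f} l i (x' i t) (u' i t) dt of every forward-feasible tuple (t'_f, x', u'). (Optimality of the padded reversal of an optimal backward solution under zero waiting cost.) -/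

import Mathlib

open MeasureTheory in
/-- A forward-feasible tuple: all agents start at `s`, arrive at `g` at the common time `tf`,
respect free spaces, admissible controls and dynamics, are pairwise collision-free, and the
running costs are integrable. -/
def IsForwardFeasible {K : ℕ}
    (E : Fin K → Type*) [∀ i, NormedAddCommGroup (E i)] [∀ i, NormedSpace ℝ (E i)]
    (β : Fin K → Type*) [∀ i, Zero (β i)]
    (R : ∀ i, E i → Set (ℝ × ℝ)) (F : ∀ i, Set (E i)) (U : ∀ i, Set (β i))
    (f : ∀ i, E i → β i → E i) (l : ∀ i, E i → β i → ℝ) (s g : ∀ i, E i)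
    (tf : ℝ) (x : ∀ i, ℝ → E i) (u : ∀ i, ℝ → β i) : Prop :=
  0 < tf ∧
  (∀ i, x i 0 = s i) ∧
  (∀ i, x i tf = g i) ∧
  (∀ i, ∀ t ∈ Set.Icc (0:ℝ) tf, x i t ∈ F i) ∧
  (∀ i, ∀ t ∈ Set.Icc (0:ℝ) tf, u i t ∈ U i) ∧
  (∀ i, ∀ t ∈ Set.Ioo (0:ℝ) tf, HasDerivAt (x i) (f i (x i t) (u i t)) t) ∧
  (∀ t ∈ Set.Icc (0:ℝ) tf, ∀ i j, i ≠ j → R i (x i t) ∩ R j (x j t) = ∅) ∧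
  (∀ i, IntervalIntegrable (fun t => l i (x i t) (u i t)) volume 0 tf)

open MeasureTheory in
/-- A backward-feasible tuple: all agents start at `g`, reach `s` at their individual duration
`d i` and park there with zero control, respect free spaces, admissible controls and the
time-reversed dynamics, are pairwise collision-free, and the running costs are integrable over
the active durations. -/
def IsBackwardFeasible {K : ℕ}
    (E : Fin K → Type*) [∀ i, NormedAddCommGroup (E i)] [∀ i, NormedSpace ℝ (E i)]
    (β : Fin K → Type*) [∀ i, Zero (β i)]
    (R : ∀ i, E i → Set (ℝ × ℝ)) (F : ∀ i, Set (E i)) (U : ∀ i, Set (β i))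
    (f : ∀ i, E i → β i → E i) (l : ∀ i, E i → β i → ℝ) (s g : ∀ i, E i)
    (tf : ℝ) (d : Fin K → ℝ) (y : ∀ i, ℝ → E i) (v : ∀ i, ℝ → β i) : Prop :=
  0 < tf ∧
  (∀ i, d i ∈ Set.Ioc (0:ℝ) tf) ∧
  (∀ i, y i 0 = g i) ∧
  (∀ i, ∀ t ∈ Set.Icc (d i) tf, y i t = s i) ∧
  (∀ i, ∀ t ∈ Set.Ioo (d i) tf, v i t = 0) ∧
  (∀ i, ∀ t ∈ Set.Icc (0:ℝ) tf, y i t ∈ F i) ∧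
  (∀ i, ∀ t ∈ Set.Icc (0:ℝ) tf, v i t ∈ U i) ∧
  (∀ i, ∀ t ∈ Set.Ioo (0:ℝ) tf, HasDerivAt (y i) (-f i (y i t) (v i t)) t) ∧
  (∀ t ∈ Set.Icc (0:ℝ) tf, ∀ i j, i ≠ j → R i (y i t) ∩ R j (y j t) = ∅) ∧
  (∀ i, IntervalIntegrable (fun t => l i (y i t) (v i t)) volume 0 (d i))

/-- Under zero waiting cost, the padded reversal of a backward-cost-optimal backward solution
is a forward-feasible tuple that is optimal among all forward-feasible tuples. -/
theorem padded_reversal_of_optimal_backward_is_optimal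
    {K : ℕ} (hK : 1 ≤ K)
    (E : Fin K → Type*) [∀ i, NormedAddCommGroup (E i)] [∀ i, NormedSpace ℝ (E i)]
    (β : Fin K → Type*) [∀ i, Zero (β i)]
    (R : ∀ i, E i → Set (ℝ × ℝ)) (F : ∀ i, Set (E i)) (U : ∀ i, Set (β i))
    (hU : ∀ i, (0 : β i) ∈ U i)
    (f : ∀ i, E i → β i → E i) (l : ∀ i, E i → β i → ℝ) (s g : ∀ i, E i)
    (hrest : ∀ i, f i (s i) 0 = 0)
    (hl0 : ∀ i, ∀ a : E i, l i a 0 = 0)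
    (tf : ℝ) (d : Fin K → ℝ) (y : ∀ i, ℝ → E i) (v : ∀ i, ℝ → β i)
    (hback : IsBackwardFeasible E β R F U f l s g tf d y v)
    (hopt : ∀ (tf' : ℝ) (d' : Fin K → ℝ) (y' : ∀ i, ℝ → E i) (v' : ∀ i, ℝ → β i),
      IsBackwardFeasible E β R F U f l s g tf' d' y' v' →
      (∑ i, ∫ t in (0:ℝ)..(d i), l i (y i t) (v i t)) ≤
        ∑ i, ∫ t in (0:ℝ)..(d' i), l i (y' i t) (v' i t)) :
    IsForwardFeasible E β R F U f l s g tf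
        (fun i t => y i (tf - t))
        (fun i t => if t < tf - d i then (0 : β i) else v i (tf - t)) ∧
    (∀ (tf' : ℝ) (x' : ∀ i, ℝ → E i) (u' : ∀ i, ℝ → β i),
      IsForwardFeasible E β R F U f l s g tf' x' u' →
      (∑ i, ∫ t in (0:ℝ)..tf,
          l i (y i (tf - t)) (if t < tf - d i then (0 : β i) else v i (tf - t))) ≤
        ∑ i, ∫ t in (0:ℝ)..tf', l i (x' i t) (u' i t)) := by
  obtain ⟨htf, hd, hy0, hys, hv0, hyF, hvU, hdy, hcol, hint⟩ := hback
  -- control equality on (0, tf]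
  have hue : ∀ i, ∀ t ∈ Set.Ioc (0:ℝ) tf,
      l i (y i (tf - t)) (if t < tf - d i then (0 : β i) else v i (tf - t))
        = l i (y i (tf - t)) (v i (tf - t)) := by
    intro i t ht
    by_cases h : t < tf - d i
    · have hvz : v i (tf - t) = 0 := hv0 i (tf - t)
        ⟨by linarith, by have := ht.1; linarith⟩
      simp [h, hvz]
    · simp [h]
  -- integrability of the backward running cost over [0, tf]
  have hherz : ∀ i, ∀ᵐ t : ℝ ∂MeasureTheory.volume, t ∈ Set.uIoc (d i) tf →
      l i (y i t) (v i t) = 0 := by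
    intro i
    have hne : ∀ᵐ t : ℝ ∂MeasureTheory.volume, t ≠ tf := by
      rw [MeasureTheory.ae_iff]
      simpa using Real.volume_singleton (a := tf)
    filter_upwards [hne] with t hne ht
    rw [Set.uIoc_of_le (hd i).2] at ht
    have hvz : v i t = 0 := hv0 i t ⟨ht.1, lt_of_le_of_ne ht.2 hne⟩
    rw [hvz, hl0]
  have hinttf : ∀ i, IntervalIntegrable (fun t => l i (y i t) (v i t)) MeasureTheory.volume 0 tf := by
    intro i
    refine (hint i).trans ?_
    refine (intervalIntegrable_const (c := (0:ℝ))).congr_ae ?_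
    have := ((MeasureTheory.ae_restrict_iff' measurableSet_uIoc).2 (hherz i))
    filter_upwards [this] with t h
    exact (h).symm
  have htailzero : ∀ i, (∫ t in (d i)..tf, l i (y i t) (v i t)) = 0 := by
    intro i
    rw [intervalIntegral.integral_congr_ae (g := fun _ => (0:ℝ)) (hherz i)]
    simp
  -- integrability of the forward integrand, and value of the forward integral
  have hGint : ∀ i, IntervalIntegrable
      (fun t => l i (y i (tf - t)) (v i (tf - t))) MeasureTheory.volume 0 tf := by
    intro i
    have := (hinttf i).comp_sub_left tf
    simpa using this.symm
  have hFint : ∀ i, IntervalIntegrable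
      (fun t => l i (y i (tf - t)) (if t < tf - d i then (0 : β i) else v i (tf - t)))
      MeasureTheory.volume 0 tf := by
    intro i
    refine (hGint i).congr_ae ?_
    refine ((MeasureTheory.ae_restrict_iff' measurableSet_uIoc).2 ?_)
    refine Filter.Eventually.of_forall fun t ht => ?_
    rw [Set.uIoc_of_le htf.le] at ht
    exact (hue i t ht).symm
  have hFval : ∀ i,
      (∫ t in (0:ℝ)..tf,
        l i (y i (tf - t)) (if t < tf - d i then (0 : β i) else v i (tf - t)))
      = ∫ t in (0:ℝ)..(d i), l i (y i t) (v i t) := by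
    intro i
    have h1 : (∫ t in (0:ℝ)..tf,
        l i (y i (tf - t)) (if t < tf - d i then (0 : β i) else v i (tf - t)))
        = ∫ t in (0:ℝ)..tf, l i (y i (tf - t)) (v i (tf - t)) := by
      refine intervalIntegral.integral_congr_ae ?_
      refine Filter.Eventually.of_forall fun t ht => ?_
      rw [Set.uIoc_of_le htf.le] at ht
      exact hue i t ht
    have h2 : (∫ t in (0:ℝ)..tf, l i (y i (tf - t)) (v i (tf - t)))
        = ∫ t in (0:ℝ)..tf, l i (y i t) (v i t) := by
      have := intervalIntegral.integral_comp_sub_left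
        (a := (0:ℝ)) (b := tf) (fun t => l i (y i t) (v i t)) tf
      simpa using this
    have h3 : (∫ t in (0:ℝ)..tf, l i (y i t) (v i t))
        = (∫ t in (0:ℝ)..(d i), l i (y i t) (v i t))
          + ∫ t in (d i)..tf, l i (y i t) (v i t) :=
      (intervalIntegral.integral_add_adjacent_intervals (hint i)
        ((hint i).symm.trans (hinttf i))).symm
    rw [h1, h2, h3, htailzero i, add_zero]
  -- forward feasibility
  have hmap : ∀ t ∈ Set.Icc (0:ℝ) tf, tf - t ∈ Set.Icc (0:ℝ) tf := by
    intro t ht; exact ⟨by linarith [ht.2], by linarith [ht.1]⟩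
  have hfeas : IsForwardFeasible E β R F U f l s g tf
      (fun i t => y i (tf - t))
      (fun i t => if t < tf - d i then (0 : β i) else v i (tf - t)) := by
    refine ⟨htf, ?_, ?_, ?_, ?_, ?_, ?_, hFint⟩
    · intro i
      simpa using hys i tf ⟨(hd i).2, le_refl tf⟩
    · intro i; simpa using hy0 i
    · intro i t ht; exact hyF i (tf - t) (hmap t ht)
    · intro i t ht
      by_cases h : t < tf - d i
      · simpa [h] using hU i
      · simpa [h] using hvU i (tf - t) (hmap t ht)
    · intro i t ht
      have hmem : tf - t ∈ Set.Ioo (0:ℝ) tf := ⟨by linarith [ht.2], by linarith [ht.1]⟩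
      have hder := hdy i (tf - t) hmem
      have hinner : HasDerivAt (fun t : ℝ => tf - t) (-1) t := by
        simpa using (hasDerivAt_id t).const_sub tf
      have := hder.scomp t hinner
      have heq : f i (y i (tf - t)) (v i (tf - t))
          = f i (y i (tf - t)) (if t < tf - d i then (0 : β i) else v i (tf - t)) := by
        by_cases h : t < tf - d i
        · have hvz : v i (tf - t) = 0 := hv0 i (tf - t)
            ⟨by linarith, by linarith [ht.1]⟩
          simp [h, hvz]
        · simp [h]
      rw [heq] at this
      simpa [Function.comp_def] using this
    · intro t ht i j hij
      exact hcol (tf - t) (hmap t ht) i j hij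
  refine ⟨hfeas, ?_⟩
  -- optimality
  intro tf' x' u' hfor
  obtain ⟨htf', hx0', hxtf', hxF', huU', hdx', hcol', hint'⟩ := hfor
  -- build a backward-feasible tuple by reversing (tf', x', u')
  have hbackfeas : IsBackwardFeasible E β R F U f l s g tf' (fun _ => tf')
      (fun i t => x' i (tf' - t)) (fun i t => u' i (tf' - t)) := by
    have hmap' : ∀ t ∈ Set.Icc (0:ℝ) tf', tf' - t ∈ Set.Icc (0:ℝ) tf' := by
      intro t ht; exact ⟨by linarith [ht.2], by linarith [ht.1]⟩
    refine ⟨htf', fun i => ⟨htf', le_refl _⟩, ?_, ?_, ?_, ?_, ?_, ?_, ?_, ?_⟩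
    · intro i; simpa using hxtf' i
    · intro i t ht
      have : t = tf' := le_antisymm ht.2 ht.1
      subst this
      simpa using hx0' i
    · intro i t ht
      exact absurd (ht.1.trans ht.2) (lt_irrefl _)
    · intro i t ht; exact hxF' i (tf' - t) (hmap' t ht)
    · intro i t ht; exact huU' i (tf' - t) (hmap' t ht)
    · intro i t ht
      have hmem : tf' - t ∈ Set.Ioo (0:ℝ) tf' := ⟨by linarith [ht.2], by linarith [ht.1]⟩
      have hder := hdx' i (tf' - t) hmem
      have hinner : HasDerivAt (fun t : ℝ => tf' - t) (-1) t := by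
        simpa using (hasDerivAt_id t).const_sub tf'
      have := hder.scomp t hinner
      simpa [Function.comp_def] using this
    · intro t ht i j hij
      exact hcol' (tf' - t) (hmap' t ht) i j hij
    · intro i
      have := (hint' i).comp_sub_left tf'
      simpa using this.symm
  have hle := hopt tf' (fun _ => tf') (fun i t => x' i (tf' - t))
    (fun i t => u' i (tf' - t)) hbackfeas
  have hval' : ∀ i, (∫ t in (0:ℝ)..tf', l i (x' i (tf' - t)) (u' i (tf' - t)))
      = ∫ t in (0:ℝ)..tf', l i (x' i t) (u' i t) := by
    intro i
    have := intervalIntegral.integral_comp_sub_left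
      (a := (0:ℝ)) (b := tf') (fun t => l i (x' i t) (u' i t)) tf'
    simpa using this
  calc (∑ i, ∫ t in (0:ℝ)..tf,
          l i (y i (tf - t)) (if t < tf - d i then (0 : β i) else v i (tf - t)))
      = ∑ i, ∫ t in (0:ℝ)..(d i), l i (y i t) (v i t) := by
        exact Finset.sum_congr rfl fun i _ => hFval i
    _ ≤ ∑ i, ∫ t in (0:ℝ)..tf', l i (x' i (tf' - t)) (u' i (tf' - t)) := hle
    _ = ∑ i, ∫ t in (0:ℝ)..tf', l i (x' i t) (u' i t) :=
        Finset.sum_congr rfl fun i _ => hval' i
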